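/- Let (a_n)_{n≥0} be a sequence of integers whose generating series satisfies Σ_{n≥0} a_n t^n = (h_0(a) + h_1(a)t + ⋯ + h_λ(a)t^λ)/(1−t)^d with h_λ(a) ≠ 0. Then for any r ≥ 1 the r-th Veronese series satisfies a^{⟨r⟩}(t) = (h_0(a^{⟨r⟩}) + h_1(a^{⟨r⟩})t + ⋯ + h_m(a^{⟨r⟩})t^m)/(1−t)^d where m = max(λ, d), and for every i ≥ 0 the coefficient of t^i in the polynomial (1−t)^d · a^{⟨r⟩}(t) equals Σ_{j=0}^{λ} C(r−1, d, ir−j) · h_j(a). -/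

import Mathlib

/-- `vC r d i` is the number of tuples `(u₁,…,u_d) ∈ ℤ^d` with `0 ≤ uₗ ≤ r` for all `l`
and `u₁ + ⋯ + u_d = i`.  For `d = 0` this is `1` if `i = 0` and `0` otherwise. -/
def vC (r d : ℕ) (i : ℤ) : ℕ :=
  (Finset.univ.filter fun u : Fin d → Fin (r + 1) => (∑ l, ((u l : ℕ) : ℤ)) = i).card

/-- The numerator of the `r`-th Veronese series `a^{⟨r⟩}(t) = ∑_{n≥0} a_{nr} tⁿ` of a
series with denominator `(1−t)^d`: the power series `(1−t)^d · a^{⟨r⟩}(t)`. -/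
noncomputable def veroneseNum (a : ℕ → ℤ) (d r : ℕ) : PowerSeries ℤ :=
  PowerSeries.mk (fun n => a (n * r)) * (1 - PowerSeries.X) ^ d


namespace VeroneseAux

open PowerSeries Finset

noncomputable def Ver (r : ℕ) (f : PowerSeries ℤ) : PowerSeries ℤ :=
  PowerSeries.mk fun n => PowerSeries.coeff (R := ℤ) (n * r) f

lemma coeff_Ver (r n : ℕ) (f : PowerSeries ℤ) :
    coeff (R := ℤ) n (Ver r f) = coeff (R := ℤ) (n * r) f := coeff_mk _ _

def Supp (r : ℕ) (g : PowerSeries ℤ) : Prop := ∀ n, ¬ r ∣ n → coeff (R := ℤ) n g = 0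

lemma Supp.mul {r : ℕ} {g₁ g₂ : PowerSeries ℤ} (h1 : Supp r g₁) (h2 : Supp r g₂) :
    Supp r (g₁ * g₂) := by
  intro n hn
  rw [coeff_mul]
  apply Finset.sum_eq_zero
  rintro ⟨s, t⟩ hp
  rw [Finset.HasAntidiagonal.mem_antidiagonal] at hp
  by_cases hs : r ∣ s
  · have ht : ¬ r ∣ t := fun hdt => hn (hp ▸ Nat.dvd_add hs hdt)
    simp [h2 t ht]
  · simp [h1 s hs]

lemma Supp.one_sub_X_pow (r : ℕ) (hr : 0 < r) : Supp r (1 - X ^ r : PowerSeries ℤ) := by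
  intro n hn
  have h0 : n ≠ 0 := by rintro rfl; exact hn (dvd_zero r)
  have h1 : n ≠ r := by rintro rfl; exact hn dvd_rfl
  simp [coeff_X_pow, coeff_one, h0, h1]

lemma Supp.pow (r d : ℕ) (hr : 0 < r) : Supp r ((1 - X ^ r : PowerSeries ℤ) ^ d) := by
  induction d with
  | zero =>
    intro n hn
    have h0 : n ≠ 0 := by rintro rfl; exact hn (dvd_zero r)
    simp [coeff_one, h0]
  | succ d ih => rw [pow_succ]; exact ih.mul (Supp.one_sub_X_pow r hr)

lemma Ver_mul {r : ℕ} (hr : 0 < r) (f g : PowerSeries ℤ) (hg : Supp r g) :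
    Ver r (f * g) = Ver r f * Ver r g := by
  ext i
  rw [coeff_Ver, coeff_mul, coeff_mul]
  simp only [coeff_Ver]
  have hsub : (antidiagonal i).image (fun p : ℕ × ℕ => (p.1 * r, p.2 * r))
      ⊆ antidiagonal (i * r) := by
    intro p hp
    simp only [Finset.mem_image, Finset.HasAntidiagonal.mem_antidiagonal] at hp ⊢
    obtain ⟨⟨u, v⟩, huv, rfl⟩ := hp
    have huv' : u + v = i := huv
    show u * r + v * r = i * r
    rw [← huv']; ring
  have hzero : ∀ p ∈ antidiagonal (i * r),
      p ∉ (antidiagonal i).image (fun p : ℕ × ℕ => (p.1 * r, p.2 * r)) →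
      coeff (R := ℤ) p.1 f * coeff (R := ℤ) p.2 g = 0 := by
    rintro ⟨u, v⟩ hp hnot
    rw [Finset.HasAntidiagonal.mem_antidiagonal] at hp
    by_cases hv : r ∣ v
    · obtain ⟨b, rfl⟩ := hv
      exfalso
      apply hnot
      have hb : b ≤ i := by
        by_contra hb
        push_neg at hb
        nlinarith [hp]
      have hu : u = (i - b) * r := by
        have : (i - b) * r + r * b = i * r := by
          rw [mul_comm r b, ← Nat.add_mul, Nat.sub_add_cancel hb]
        omega
      simp only [Finset.mem_image, Finset.HasAntidiagonal.mem_antidiagonal]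
      refine ⟨(i - b, b), ?_, ?_⟩
      · show i - b + b = i
        omega
      · show ((i - b) * r, b * r) = (u, r * b)
        rw [hu, mul_comm b r]
    · rw [hg v hv, mul_zero]
  rw [← Finset.sum_subset hsub hzero]
  rw [Finset.sum_image]
  rintro ⟨u₁, v₁⟩ h₁ ⟨u₂, v₂⟩ h₂ heq
  simp only [Prod.mk.injEq] at heq ⊢
  constructor
  · exact Nat.eq_of_mul_eq_mul_right hr heq.1
  · exact Nat.eq_of_mul_eq_mul_right hr heq.2

lemma Ver_one_sub_X_pow {r : ℕ} (hr : 0 < r) :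
    Ver r (1 - X ^ r : PowerSeries ℤ) = 1 - X := by
  ext n
  rw [coeff_Ver]
  simp only [map_sub, coeff_one, coeff_X_pow, coeff_X]
  have h1 : n * r = 0 ↔ n = 0 := by
    constructor <;> intro hh
    · exact Nat.mul_eq_zero.mp hh |>.resolve_right (by omega)
    · simp [hh]
  have h2 : n * r = r ↔ n = 1 := by
    constructor <;> intro hh
    · nlinarith
    · simp [hh]
  rw [if_congr h1 rfl rfl, if_congr h2 rfl rfl]

lemma Ver_pow {r : ℕ} (hr : 0 < r) (d : ℕ) :
    Ver r ((1 - X ^ r : PowerSeries ℤ) ^ d) = (1 - X) ^ d := by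
  induction d with
  | zero =>
    ext n
    rw [pow_zero, pow_zero, coeff_Ver]
    simp only [coeff_one]
    have h1 : n * r = 0 ↔ n = 0 := by
      constructor <;> intro hh
      · exact Nat.mul_eq_zero.mp hh |>.resolve_right (by omega)
      · simp [hh]
    rw [if_congr h1 rfl rfl]
  | succ d ih =>
    rw [pow_succ, Ver_mul hr _ _ (Supp.one_sub_X_pow r hr), ih,
      Ver_one_sub_X_pow hr, pow_succ]

lemma coeff_geom_pow (s d m : ℕ) :
    coeff (R := ℤ) m ((∑ l ∈ Finset.range (s + 1), X ^ l : PowerSeries ℤ) ^ d)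
      = (vC s d (m : ℤ) : ℤ) := by
  have hQ : (∑ l ∈ Finset.range (s + 1), X ^ l : PowerSeries ℤ)
      = ∑ l : Fin (s + 1), X ^ (l : ℕ) := Finset.sum_range _
  rw [hQ, ← Fin.prod_const d, Finset.prod_univ_sum]
  simp only [Fintype.piFinset_univ, Finset.prod_pow_eq_pow_sum]
  rw [map_sum]
  simp only [coeff_X_pow]
  rw [vC, Finset.card_filter]
  push_cast
  apply Finset.sum_congr rfl
  intro u _
  have hiff : m = ∑ l, (u l : ℕ) ↔ (∑ l, ((u l : ℕ) : ℤ)) = (m : ℤ) := by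
    rw [eq_comm]
    push_cast
    constructor <;> exact fun hh => by exact_mod_cast hh
  simp only [hiff]

lemma vC_eq_zero_of_neg (r d : ℕ) {i : ℤ} (hi : i < 0) : vC r d i = 0 := by
  rw [vC, Finset.card_eq_zero, Finset.filter_eq_empty_iff]
  intro u _
  intro hcon
  have : (0 : ℤ) ≤ ∑ l, ((u l : ℕ) : ℤ) :=
    Finset.sum_nonneg fun _ _ => Int.natCast_nonneg _
  omega

lemma vC_eq_zero_of_lt (r d : ℕ) {i : ℤ} (hi : (d : ℤ) * r < i) : vC r d i = 0 := by
  rw [vC, Finset.card_eq_zero, Finset.filter_eq_empty_iff]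
  intro u _
  intro hcon
  have hle : ∑ l, ((u l : ℕ) : ℤ) ≤ ∑ _l : Fin d, (r : ℤ) :=
    Finset.sum_le_sum fun l _ => by exact_mod_cast Nat.le_of_lt_succ (u l).isLt
  rw [Finset.sum_const, Finset.card_univ, Fintype.card_fin, nsmul_eq_mul] at hle
  omega

end VeroneseAux

open PowerSeries Finset VeroneseAux

/-- Let `(a_n)` be an integer sequence with `∑ a_n tⁿ = (h₀ + h₁ t + ⋯ + h_λ t^λ)/(1−t)^d`,
`h_λ ≠ 0`.  Then for any `r ≥ 1`,
`a^{⟨r⟩}(t) = (h₀(a^{⟨r⟩}) + ⋯ + h_m(a^{⟨r⟩}) t^m)/(1−t)^d` with `m = max(λ,d)`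
(i.e. the coefficients of `(1−t)^d · a^{⟨r⟩}(t)` vanish above degree `m`), and for every
`i ≥ 0` the coefficient of `tⁱ` in `(1−t)^d · a^{⟨r⟩}(t)` equals
`∑_{j=0}^{λ} C(r−1, d, ir−j)·h_j(a)`. -/
theorem stmt_2 (a : ℕ → ℤ) (d lam : ℕ) (h : Polynomial ℤ)
    (hgen : PowerSeries.mk a * (1 - PowerSeries.X) ^ d = (h : PowerSeries ℤ))
    (hdeg : h.natDegree = lam) (hlam : h.coeff lam ≠ 0)
    (r : ℕ) (hr : 1 ≤ r) :
    (∀ i : ℕ, max lam d < i → PowerSeries.coeff (R := ℤ) i (veroneseNum a d r) = 0) ∧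
    (∀ i : ℕ, PowerSeries.coeff (R := ℤ) i (veroneseNum a d r)
        = ∑ j ∈ Finset.range (lam + 1),
            (vC (r - 1) d ((i : ℤ) * (r : ℤ) - (j : ℤ)) : ℤ) * h.coeff j) := by
  obtain ⟨s, rfl⟩ : ∃ s, r = s + 1 := ⟨r - 1, by omega⟩
  have hrs : s + 1 - 1 = s := by omega
  rw [hrs]
  have hr0 : 0 < s + 1 := Nat.succ_pos s
  set Q : PowerSeries ℤ := ∑ l ∈ Finset.range (s + 1), X ^ l with hQdef
  have hfac : (1 - X ^ (s + 1) : PowerSeries ℤ) = (1 - X) * Q := by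
    have hgeom := geom_sum_mul (X : PowerSeries ℤ) (s + 1)
    rw [hQdef]
    linear_combination hgeom
  have key : veroneseNum a d (s + 1) = Ver (s + 1) ((h : PowerSeries ℤ) * Q ^ d) := by
    have h1 : PowerSeries.mk a * (1 - X ^ (s + 1)) ^ d
        = (h : PowerSeries ℤ) * Q ^ d := by
      rw [hfac, mul_pow, ← mul_assoc, hgen]
    rw [← h1, Ver_mul hr0 _ _ (Supp.pow _ _ hr0), Ver_pow hr0]
    unfold veroneseNum Ver
    congr 1
    ext n
    rw [coeff_mk, coeff_mk, coeff_mk]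
  have main : ∀ i : ℕ, PowerSeries.coeff (R := ℤ) i (veroneseNum a d (s + 1))
      = ∑ j ∈ Finset.range (lam + 1),
          (vC s d ((i : ℤ) * ((s : ℤ) + 1) - (j : ℤ)) : ℤ) * h.coeff j := by
    intro i
    rw [key, coeff_Ver, coeff_mul, Finset.Nat.sum_antidiagonal_eq_sum_range_succ_mk]
    simp only [Polynomial.coeff_coe, hQdef, coeff_geom_pow]
    set N := i * (s + 1) with hN
    set M := max N lam with hM
    have hstep1 : ∑ j ∈ Finset.range (N + 1), h.coeff j * (vC s d ((N - j : ℕ) : ℤ) : ℤ)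
        = ∑ j ∈ Finset.range (M + 1), h.coeff j * (vC s d ((i : ℤ) * ((s : ℤ) + 1) - (j : ℤ)) : ℤ) := by
      rw [Finset.sum_congr rfl (g := fun j => h.coeff j * (vC s d ((i : ℤ) * ((s : ℤ) + 1) - (j : ℤ)) : ℤ)) ?_]
      · apply Finset.sum_subset
        · apply Finset.range_subset_range.mpr; omega
        · intro j hj hj'
          simp only [Finset.mem_range] at hj hj'
          have : (i : ℤ) * ((s : ℤ) + 1) - (j : ℤ) < 0 := by
            have : (N : ℤ) < (j : ℤ) := by exact_mod_cast (by omega : N < j)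
            rw [hN] at this
            push_cast at this
            omega
          rw [vC_eq_zero_of_neg _ _ this]
          simp
      · intro j hj
        simp only [Finset.mem_range] at hj
        congr 2
        have hjN : j ≤ N := by omega
        have : ((N - j : ℕ) : ℤ) = (N : ℤ) - (j : ℤ) := by
          exact_mod_cast Int.ofNat_sub hjN
        rw [this, hN]
        push_cast
        ring
    rw [hstep1]
    rw [← Finset.sum_subset (Finset.range_subset_range.mpr (by omega : lam + 1 ≤ M + 1)) ?_]
    · apply Finset.sum_congr rfl
      intro j _
      ring
    · intro j hj hj'
      simp only [Finset.mem_range] at hj hj'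
      have : h.coeff j = 0 :=
        Polynomial.coeff_eq_zero_of_natDegree_lt (by omega)
      rw [this, zero_mul]
  refine ⟨?_, main⟩
  intro i hi
  rw [main i]
  apply Finset.sum_eq_zero
  intro j hj
  simp only [Finset.mem_range] at hj
  have hlt : (d : ℤ) * (s : ℤ) < (i : ℤ) * ((s : ℤ) + 1) - (j : ℤ) := by
    have h1 : lam < i := lt_of_le_of_lt (le_max_left _ _) hi
    have h2 : d < i := lt_of_le_of_lt (le_max_right _ _) hi
    have h1' : (j : ℤ) < (i : ℤ) := by exact_mod_cast (by omega : j < i)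
    have h2' : (d : ℤ) < (i : ℤ) := by exact_mod_cast h2
    nlinarith [Int.natCast_nonneg s]
  rw [vC_eq_zero_of_lt _ _ hlt, Nat.cast_zero, zero_mul]
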